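/- The Foata normal form of a trace is unique: if F₁…F_h = G₁…G_l in M(E,I) with both sides satisfying the Foata conditions, then h = l and F_k = G_k for all k. -/

import Mathlib

/-- One elementary transposition of adjacent independent letters. -/
def TraceStep {E : Type} (I : E → E → Prop) (w₁ w₂ : List E) : Prop :=
  ∃ u v a b, I a b ∧ w₁ = u ++ a :: b :: v ∧ w₂ = u ++ b :: a :: v

/-- Trace equivalence: the equivalence relation generated by transposing
adjacent independent letters. -/
def TraceEquiv {E : Type} (I : E → E → Prop) : List E → List E → Prop :=
  Relation.EqvGen (TraceStep I)

/-- A step: a nonempty word of pairwise independent distinct letters written in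
increasing order. -/
def IsStep {E : Type} [LT E] (I : E → E → Prop) (c : List E) : Prop :=
  c ≠ [] ∧ c.Pairwise (· < ·) ∧ c.Pairwise I

/-- The Foata conditions for a factorization into steps. -/
def IsFoata {E : Type} [LT E] (I : E → E → Prop) (L : List (List E)) : Prop :=
  (∀ c ∈ L, IsStep I c) ∧
  L.Chain' (fun c₁ c₂ => ∀ a ∈ c₂, ∃ b ∈ c₁, ¬ I a b)

/-- A parallel process: a factorization into nonempty blocks of pairwise
independent letters. -/
def IsParProc {E : Type} (I : E → E → Prop) (M : List (List E)) : Prop :=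
  ∀ c ∈ M, c ≠ [] ∧ c.Pairwise I

/-- Replace each letter `e` of a word by `τ e` copies of the corresponding
unit-time small instruction. -/
def expandWord {E : Type} (τ : E → ℕ) (w : List E) : List E :=
  (w.map fun e => List.replicate (τ e) e).flatten


section FoataAux

variable {E : Type} [LinearOrder E]

/-- `a` is independent of every letter occurring in `L`. -/
def indepAll (I : E → E → Prop) (a : E) (L : List (List E)) : Prop :=
  ∀ c ∈ L, ∀ b ∈ c, I a b

open Classical in
/-- Foata insertion of a single letter into a list of blocks. -/
noncomputable def ins (I : E → E → Prop) (a : E) : List (List E) → List (List E)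
  | [] => [[a]]
  | c :: L => if indepAll I a (c :: L) then List.orderedInsert (· ≤ ·) a c :: L
              else c :: ins I a L

/-- The Foata normal form computed by successive insertions. -/
noncomputable def foataNF (I : E → E → Prop) (w : List E) : List (List E) :=
  w.foldl (fun L a => ins I a L) []

variable {I : E → E → Prop}

omit [LinearOrder E] in
lemma indepAll_cons {a : E} {c : List E} {L : List (List E)} :
    indepAll I a (c :: L) ↔ (∀ b ∈ c, I a b) ∧ indepAll I a L := by
  simp [indepAll]

lemma ins_nil (a : E) : ins I a [] = [[a]] := by rw [ins]

lemma ins_cons_pos {a : E} {c : List E} {L : List (List E)} (h : indepAll I a (c :: L)) :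
    ins I a (c :: L) = List.orderedInsert (· ≤ ·) a c :: L := by rw [ins, if_pos h]

lemma ins_cons_neg {a : E} {c : List E} {L : List (List E)} (h : ¬ indepAll I a (c :: L)) :
    ins I a (c :: L) = c :: ins I a L := by rw [ins, if_neg h]

lemma indepAll_oi_cons {a b : E} {c : List E} {L : List (List E)} (hab : I a b) :
    indepAll I a (List.orderedInsert (· ≤ ·) b c :: L) ↔ indepAll I a (c :: L) := by
  simp only [indepAll_cons]
  constructor
  · rintro ⟨h1, h2⟩
    exact ⟨fun x hx => h1 x ((List.mem_orderedInsert _).2 (Or.inr hx)), h2⟩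
  · rintro ⟨h1, h2⟩
    refine ⟨fun x hx => ?_, h2⟩
    rcases (List.mem_orderedInsert _).1 hx with rfl | hx
    · exact hab
    · exact h1 x hx

lemma indepAll_ins {a b : E} (hab : I a b) (L : List (List E)) :
    indepAll I a (ins I b L) ↔ indepAll I a L := by
  induction L with
  | nil => simp [ins_nil, indepAll, hab]
  | cons c L ih =>
    by_cases h : indepAll I b (c :: L)
    · rw [ins_cons_pos h, indepAll_oi_cons hab]
    · rw [ins_cons_neg h, indepAll_cons, indepAll_cons, ih]

lemma oi_comm (a b : E) (l : List E) :
    List.orderedInsert (· ≤ ·) a (List.orderedInsert (· ≤ ·) b l)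
      = List.orderedInsert (· ≤ ·) b (List.orderedInsert (· ≤ ·) a l) := by
  induction l with
  | nil =>
    simp only [List.orderedInsert_nil, List.orderedInsert]
    split_ifs <;>
      first | rfl | (cases le_antisymm ‹a ≤ b› ‹b ≤ a›; rfl)
            | (exfalso; rcases le_total a b with h | h <;> tauto)
  | cons x l ih =>
    simp only [List.orderedInsert]
    split_ifs <;> simp only [List.orderedInsert, ih] <;> split_ifs <;>
      first | rfl | (cases le_antisymm ‹a ≤ b› ‹b ≤ a›; rfl)
            | (exfalso;
               rcases le_total a b with h | h <;> rcases le_total a x with h' | h' <;>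
               rcases le_total b x with h'' | h'' <;>
               first | tauto
                     | exact absurd (le_trans ‹a ≤ b› ‹b ≤ x›) ‹¬ a ≤ x›
                     | exact absurd (le_trans ‹b ≤ a› ‹a ≤ x›) ‹¬ b ≤ x›)

lemma ins_comm {a b : E} (hab : I a b) (hba : I b a) (L : List (List E)) :
    ins I a (ins I b L) = ins I b (ins I a L) := by
  induction L with
  | nil =>
    have hb : indepAll I a [[b]] := by
      intro c hc x hx; simp at hc; subst hc; simp at hx; subst hx; exact hab
    have ha : indepAll I b [[a]] := by
      intro c hc x hx; simp at hc; subst hc; simp at hx; subst hx; exact hba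
    rw [ins_nil, ins_nil, ins_cons_pos hb, ins_cons_pos ha]
    have := oi_comm a b ([] : List E)
    simp only [List.orderedInsert_nil] at this
    rw [this]
  | cons c L ih =>
    by_cases hB : indepAll I b (c :: L) <;> by_cases hA : indepAll I a (c :: L)
    · rw [ins_cons_pos hB, ins_cons_pos hA,
        ins_cons_pos ((indepAll_oi_cons hab).2 hA),
        ins_cons_pos ((indepAll_oi_cons hba).2 hB), oi_comm]
    · have hBc : indepAll I b (c :: ins I a L) :=
        indepAll_cons.2 ⟨(indepAll_cons.1 hB).1,
          (indepAll_ins hba _).2 (indepAll_cons.1 hB).2⟩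
      rw [ins_cons_pos hB, ins_cons_neg hA,
        ins_cons_neg (fun h => hA ((indepAll_oi_cons hab).1 h)),
        ins_cons_pos hBc]
    · have hAc : indepAll I a (c :: ins I b L) :=
        indepAll_cons.2 ⟨(indepAll_cons.1 hA).1,
          (indepAll_ins hab _).2 (indepAll_cons.1 hA).2⟩
      rw [ins_cons_neg hB, ins_cons_pos hA, ins_cons_pos hAc,
        ins_cons_neg (fun h => hB ((indepAll_oi_cons hba).1 h))]
    · have c1 : ¬ indepAll I a (c :: ins I b L) := fun h =>
        hA (indepAll_cons.2 ⟨(indepAll_cons.1 h).1,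
          (indepAll_ins hab _).1 (indepAll_cons.1 h).2⟩)
      have c2 : ¬ indepAll I b (c :: ins I a L) := fun h =>
        hB (indepAll_cons.2 ⟨(indepAll_cons.1 h).1,
          (indepAll_ins hba _).1 (indepAll_cons.1 h).2⟩)
      rw [ins_cons_neg hB, ins_cons_neg hA, ins_cons_neg c1, ins_cons_neg c2, ih]

lemma foataNF_step (hsym : Symmetric I) {w₁ w₂ : List E} (h : TraceStep I w₁ w₂) :
    foataNF I w₁ = foataNF I w₂ := by
  obtain ⟨u, v, a, b, hI, rfl, rfl⟩ := h
  have e1 : u ++ a :: b :: v = (u ++ [a, b]) ++ v := by simp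
  have e2 : u ++ b :: a :: v = (u ++ [b, a]) ++ v := by simp
  rw [e1, e2]
  simp only [foataNF, List.foldl_append]
  congr 1
  simp only [List.foldl_cons, List.foldl_nil]
  exact ins_comm (hsym hI) hI _

lemma foataNF_equiv (hsym : Symmetric I) {w₁ w₂ : List E} (h : TraceEquiv I w₁ w₂) :
    foataNF I w₁ = foataNF I w₂ := by
  induction h with
  | rel _ _ h => exact foataNF_step hsym h
  | refl => rfl
  | symm _ _ _ ih => exact ih.symm
  | trans _ _ _ _ _ ih1 ih2 => exact ih1.trans ih2

omit [LinearOrder E] in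
lemma not_indepAll_of_dep {a : E} {d : List E} (hdep : ∃ b ∈ d, ¬ I a b)
    {L : List (List E)} (hd : d ∈ L) : ¬ indepAll I a L := by
  rintro h
  obtain ⟨b, hb, hnb⟩ := hdep
  exact hnb (h d hd b hb)

lemma oi_last {a : E} {u : List E} (h : ∀ x ∈ u, x < a) :
    List.orderedInsert (· ≤ ·) a u = u ++ [a] := by
  induction u with
  | nil => rfl
  | cons x u ih =>
    rw [List.orderedInsert, if_neg (not_le.2 (h x (by simp)))]
    simp only [List.cons_append, List.cons.injEq, true_and]
    exact ih fun y hy => h y (by simp [hy])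

lemma ins_push {a : E} {d : List E} (hdep : ∃ b ∈ d, ¬ I a b) (P : List (List E)) :
    ins I a (P ++ [d]) = P ++ [d, [a]] := by
  induction P with
  | nil =>
    rw [List.nil_append, ins_cons_neg (not_indepAll_of_dep hdep (by simp)), ins_nil]
    rfl
  | cons p P ih =>
    rw [List.cons_append, ins_cons_neg (not_indepAll_of_dep hdep (by simp)), ih]
    rfl

lemma ins_push2 {a : E} {d u : List E} (hdep : ∃ b ∈ d, ¬ I a b)
    (hu : ∀ x ∈ u, I a x) (P : List (List E)) :
    ins I a (P ++ [d, u]) = P ++ [d, List.orderedInsert (· ≤ ·) a u] := by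
  induction P with
  | nil =>
    rw [List.nil_append, ins_cons_neg (not_indepAll_of_dep hdep (by simp)),
      ins_cons_pos (indepAll_cons.2 ⟨hu, by simp [indepAll]⟩)]
    rfl
  | cons p P ih =>
    rw [List.cons_append, ins_cons_neg (not_indepAll_of_dep hdep (by simp)), ih]
    rfl

lemma fold_block2 {d : List E} (P : List (List E)) :
    ∀ (c u : List E), (∀ a ∈ c, ∃ b ∈ d, ¬ I a b) →
      ((u ++ c).Pairwise (fun x y => x < y ∧ I y x)) →
      List.foldl (fun L a => ins I a L) (P ++ [d, u]) c = P ++ [d, u ++ c]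
  | [], u, _, _ => by simp
  | a :: c, u, hdep, hpw => by
    have hu : ∀ x ∈ u, x < a ∧ I a x := fun x hx =>
      (List.pairwise_append.1 hpw).2.2 x hx a (by simp)
    rw [List.foldl_cons]
    rw [show ins I a (P ++ [d, u]) = P ++ [d, u ++ [a]] by
      rw [ins_push2 (hdep a (by simp)) (fun x hx => (hu x hx).2) P,
        oi_last (fun x hx => (hu x hx).1)]]
    have hpw' : ((u ++ [a]) ++ c).Pairwise (fun x y => x < y ∧ I y x) := by
      rw [List.append_assoc]; exact hpw
    rw [fold_block2 P c (u ++ [a]) (fun x hx => hdep x (by simp [hx])) hpw']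
    simp

lemma fold_block1 :
    ∀ (c u : List E), ((u ++ c).Pairwise (fun x y => x < y ∧ I y x)) →
      List.foldl (fun L a => ins I a L) [u] c = [u ++ c]
  | [], u, _ => by simp
  | a :: c, u, hpw => by
    have hu : ∀ x ∈ u, x < a ∧ I a x := fun x hx =>
      (List.pairwise_append.1 hpw).2.2 x hx a (by simp)
    rw [List.foldl_cons]
    rw [show ins I a [u] = [u ++ [a]] by
      rw [ins_cons_pos (indepAll_cons.2 ⟨fun x hx => (hu x hx).2, by simp [indepAll]⟩),
        oi_last (fun x hx => (hu x hx).1)]]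
    have hpw' : ((u ++ [a]) ++ c).Pairwise (fun x y => x < y ∧ I y x) := by
      rw [List.append_assoc]; exact hpw
    rw [fold_block1 c (u ++ [a]) hpw']
    simp

lemma foataNF_flatten (hsym : Symmetric I) :
    ∀ (L : List (List E)), IsFoata I L → foataNF I L.flatten = L := by
  intro L
  induction L using List.reverseRecOn with
  | nil => intro _; rfl
  | append_singleton L c ih =>
    rintro ⟨hsteps, hchain⟩
    have hL : IsFoata I L :=
      ⟨fun c hc => hsteps c (by simp [hc]), (List.isChain_append.1 hchain).1⟩
    obtain ⟨hne, hsort, hpair⟩ := hsteps c (by simp)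
    have hpw : c.Pairwise (fun x y => x < y ∧ I y x) :=
      (hsort.and hpair).imp (fun h => ⟨h.1, hsym h.2⟩)
    have hflat : (L ++ [c]).flatten = L.flatten ++ c := by simp
    rw [hflat]
    have : foataNF I (L.flatten ++ c)
        = List.foldl (fun M a => ins I a M) (foataNF I L.flatten) c := by
      simp [foataNF, List.foldl_append]
    rw [this, ih hL]
    obtain ⟨a, c', rfl⟩ := List.exists_cons_of_ne_nil hne
    rcases L.eq_nil_or_concat with rfl | ⟨P, d, rfl⟩
    · rw [List.nil_append, List.foldl_cons, ins_nil, fold_block1 c' [a] hpw]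
      simp
    · simp only [List.concat_eq_append] at hchain ⊢
      have hdep : ∀ x ∈ a :: c', ∃ b ∈ d, ¬ I x b := by
        have := (List.isChain_append.1 hchain).2.2 d (by rw [List.getLast?_concat]; rfl)
          (a :: c') (by simp)
        exact this
      rw [List.foldl_cons, ins_push (hdep a (by simp)) P,
        fold_block2 P c' [a] (fun x hx => hdep x (by simp [hx])) hpw]
      simp

end FoataAux

/-- the Foata normal form of a trace is unique. -/
theorem foata_unique
    {E : Type} [LinearOrder E] [Fintype E]
    (I : E → E → Prop) (hirr : Irreflexive I) (hsym : Symmetric I)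
    (L L' : List (List E)) (hL : IsFoata I L) (hL' : IsFoata I L')
    (h : TraceEquiv I L.flatten L'.flatten) : L = L' := by
  have h1 := foataNF_flatten hsym L hL
  have h2 := foataNF_flatten hsym L' hL'
  rw [← h1, ← h2, foataNF_equiv hsym h]
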